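/- Let S be a regular semigroup and a, b ∈ S group-bound elements. Then a ∼ b if and only if a·e_a ∼ b·e_b. -/
import Mathlib


variable {S : Type*} [Semigroup S]

/-- Primary conjugacy: `a = x*y` and `b = y*x` for some `x, y`. -/
def PConj (a b : S) : Prop := ∃ x y : S, a = x * y ∧ b = y * x

/-- Conjugacy: the transitive closure of primary conjugacy. -/
def SConj : S → S → Prop := Relation.TransGen PConj

/-- `pw a n` is `a ^ n` for `n ≥ 1` (with junk value `a` at `n = 0`). -/
def pw (a : S) : ℕ → S
  | 0 => a
  | 1 => a
  | n + 2 => pw a (n + 1) * a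

/-- An element is a group element iff it lies in some subgroup of `S`:
there is an idempotent `e` acting as identity on `a`, and an inverse of `a`
relative to `e`. -/
def IsGroupElement (a : S) : Prop :=
  ∃ e b : S, e * e = e ∧ e * a = a ∧ a * e = a ∧ a * b = e ∧ b * a = e

/-- An element is group-bound if some positive power is a group element. -/
def GroupBound (a : S) : Prop := ∃ n : ℕ, 1 ≤ n ∧ IsGroupElement (pw a n)

/-- Green's L-relation: same principal left ideal in `S¹`. -/
def LRel (a b : S) : Prop :=
  (∃ u : WithOne S, u * (a : WithOne S) = (b : WithOne S)) ∧
  (∃ u : WithOne S, u * (b : WithOne S) = (a : WithOne S))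

/-- Green's R-relation: same principal right ideal in `S¹`. -/
def RRel (a b : S) : Prop :=
  (∃ u : WithOne S, (a : WithOne S) * u = (b : WithOne S)) ∧
  (∃ u : WithOne S, (b : WithOne S) * u = (a : WithOne S))

/-- Green's H-relation. -/
def HRel (a b : S) : Prop := LRel a b ∧ RRel a b

/-- Green's D-relation. -/
def DRel (a b : S) : Prop := ∃ c : S, LRel a c ∧ RRel c b

lemma pw_succ (a : S) {m : ℕ} (hm : 1 ≤ m) : pw a (m+1) = pw a m * a := by
  cases m with
  | zero => omega
  | succ k => rfl
lemma pw_succ' (a : S) : ∀ {m : ℕ}, 1 ≤ m → pw a (m+1) = a * pw a m := by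
  intro m
  induction m with
  | zero => omega
  | succ k ih =>
    intro _
    rcases Nat.eq_zero_or_pos k with h0 | hk
    · subst h0; rfl
    · calc pw a (k+2) = pw a (k+1) * a := pw_succ a (by omega)
        _ = (a * pw a k) * a := by rw [ih hk]
        _ = a * (pw a k * a) := mul_assoc _ _ _
        _ = a * pw a (k+1) := by rw [← pw_succ a hk]
lemma pw_add (a : S) : ∀ {m k : ℕ}, 1 ≤ m → 1 ≤ k → pw a (m+k) = pw a m * pw a k := by
  intro m k hm
  induction k with
  | zero => omega
  | succ j ih =>
    intro _
    rcases Nat.eq_zero_or_pos j with h0 | hj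
    · subst h0; exact pw_succ a hm
    · calc pw a (m+(j+1)) = pw a ((m+j)+1) := by rw [show m+(j+1) = (m+j)+1 by omega]
        _ = pw a (m+j) * a := pw_succ a (by omega)
        _ = (pw a m * pw a j) * a := by rw [ih hj]
        _ = pw a m * (pw a j * a) := mul_assoc _ _ _
        _ = pw a m * pw a (j+1) := by rw [← pw_succ a hj]

set_option maxHeartbeats 1600000 in
lemma key_lemma (hreg : ∀ x : S, ∃ y : S, x = x * y * x) :
    ∀ (n : ℕ), 1 ≤ n → ∀ (a e h : S),
    e * e = e →
    (∀ m, n ≤ m → e * pw a m = pw a m) →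
    (∀ m, n ≤ m → pw a m * e = pw a m) →
    pw a n * h = e → h * pw a n = e → e * h = h → h * e = h →
    a * e = a ∨ SConj a (a * e) := by
  intro n
  induction n with
  | zero => intro h0; omega
  | succ n ih =>
    intro _ a e h he hel her hgh hhg heh hhe
    rcases Nat.eq_zero_or_pos n with h0 | hn
    · subst h0
      exact Or.inl (her 1 le_rfl)
    · right
      -- ================== commutation e*a = a*e ==================
      have habs : ∀ m, 1 ≤ m → pw a (m + (n+1)) * h = pw a m * e := by
        intro m hm
        rw [pw_add a hm (by omega), mul_assoc, hgh]
      have habs' : ∀ m, 1 ≤ m → h * pw a ((n+1) + m) = e * pw a m := by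
        intro m hm
        rw [pw_add a (by omega) hm, ← mul_assoc, hhg]
      have t1 : pw a (3*n+3) * h = pw a (2*n+2) := by
        have := habs (2*n+2) (by omega)
        rw [show (2*n+2) + (n+1) = 3*n+3 by omega] at this
        rw [this, her (2*n+2) (by omega)]
      have t2 : pw a (2*n+2) * h = pw a (n+1) := by
        have := habs (n+1) (by omega)
        rw [show (n+1) + (n+1) = 2*n+2 by omega] at this
        rw [this, her (n+1) (by omega)]
      have s1 : pw a (3*n+3) * (h * (h * h)) = e := by
        calc pw a (3*n+3) * (h * (h * h)) = ((pw a (3*n+3) * h) * h) * h := by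
              simp only [mul_assoc]
          _ = e := by rw [t1, t2, hgh]
      have hsplit1 : pw a (n+2) * pw a (2*n+1) = pw a (3*n+3) := by
        rw [← pw_add a (by omega) (by omega), show (n+2)+(2*n+1) = 3*n+3 by omega]
      have hsplit2 : pw a (2*n+1) * pw a (n+2) = pw a (3*n+3) := by
        rw [← pw_add a (by omega) (by omega), show (2*n+1)+(n+2) = 3*n+3 by omega]
      have s1' : pw a (n+2) * (pw a (2*n+1) * (h * (h * h))) = e := by
        rw [← mul_assoc, hsplit1, s1]
      have u1 : h * pw a (3*n+3) = pw a (2*n+2) := by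
        have := habs' (2*n+2) (by omega)
        rw [show (n+1) + (2*n+2) = 3*n+3 by omega] at this
        rw [this, hel (2*n+2) (by omega)]
      have u2 : h * pw a (2*n+2) = pw a (n+1) := by
        have := habs' (n+1) (by omega)
        rw [show (n+1) + (n+1) = 2*n+2 by omega] at this
        rw [this, hel (n+1) (by omega)]
      have s2 : ((h * (h * h)) * pw a (2*n+1)) * pw a (n+2) = e := by
        calc ((h * (h * h)) * pw a (2*n+1)) * pw a (n+2)
            = h * (h * (h * (pw a (2*n+1) * pw a (n+2)))) := by simp only [mul_assoc]
          _ = h * (h * (h * pw a (3*n+3))) := by rw [hsplit2]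
          _ = e := by rw [u1, u2, hhg]
      have s4a : pw a (n+2) * (e * (pw a (2*n+1) * (h * (h * h)))) = e := by
        calc pw a (n+2) * (e * (pw a (2*n+1) * (h * (h * h))))
            = (pw a (n+2) * e) * (pw a (2*n+1) * (h * (h * h))) := by
              simp only [mul_assoc]
          _ = pw a (n+2) * (pw a (2*n+1) * (h * (h * h))) := by rw [her (n+2) (by omega)]
          _ = e := s1'
      have hw : ((h * (h * h)) * pw a (2*n+1)) * e = e * (pw a (2*n+1) * (h * (h * h))) := by
        have h1 : ((h * (h * h)) * pw a (2*n+1)) * e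
            = (((h * (h * h)) * pw a (2*n+1)) * pw a (n+2)) * (pw a (2*n+1) * (h * (h * h))) := by
          rw [← s1']
          simp only [mul_assoc]
        rw [h1, s2]
      have s4b : (e * (pw a (2*n+1) * (h * (h * h)))) * pw a (n+2) = e := by
        rw [← hw]
        calc (((h * (h * h)) * pw a (2*n+1)) * e) * pw a (n+2)
            = ((h * (h * h)) * pw a (2*n+1)) * (e * pw a (n+2)) := by simp only [mul_assoc]
          _ = ((h * (h * h)) * pw a (2*n+1)) * pw a (n+2) := by rw [hel (n+2) (by omega)]
          _ = e := s2
      have hswap : pw a (n+3) * pw a (n+2) = pw a (n+2) * pw a (n+3) := by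
        rw [← pw_add a (by omega) (by omega), ← pw_add a (by omega) (by omega),
          show (n+3)+(n+2) = (n+2)+(n+3) by omega]
      have s5 : (e * (pw a (2*n+1) * (h * (h * h)))) * pw a (n+3)
          = pw a (n+3) * (e * (pw a (2*n+1) * (h * (h * h)))) := by
        calc (e * (pw a (2*n+1) * (h * (h * h)))) * pw a (n+3)
            = (e * (pw a (2*n+1) * (h * (h * h)))) * (pw a (n+3) * e) := by
              rw [her (n+3) (by omega)]
          _ = (e * (pw a (2*n+1) * (h * (h * h)))) *
              (pw a (n+3) * (pw a (n+2) * (e * (pw a (2*n+1) * (h * (h * h)))))) := by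
              rw [s4a]
          _ = (e * (pw a (2*n+1) * (h * (h * h)))) *
              ((pw a (n+3) * pw a (n+2)) * (e * (pw a (2*n+1) * (h * (h * h))))) := by
              rw [← mul_assoc (pw a (n+3)) (pw a (n+2))]
          _ = (e * (pw a (2*n+1) * (h * (h * h)))) *
              ((pw a (n+2) * pw a (n+3)) * (e * (pw a (2*n+1) * (h * (h * h))))) := by
              rw [hswap]
          _ = ((e * (pw a (2*n+1) * (h * (h * h)))) * pw a (n+2)) *
              (pw a (n+3) * (e * (pw a (2*n+1) * (h * (h * h))))) := by
              simp only [mul_assoc]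
          _ = e * (pw a (n+3) * (e * (pw a (2*n+1) * (h * (h * h))))) := by rw [s4b]
          _ = (e * pw a (n+3)) * (e * (pw a (2*n+1) * (h * (h * h)))) := by
              simp only [mul_assoc]
          _ = pw a (n+3) * (e * (pw a (2*n+1) * (h * (h * h)))) := by
              rw [hel (n+3) (by omega)]
      have F2 : e * a = a * e := by
        calc e * a = ((e * (pw a (2*n+1) * (h * (h * h)))) * pw a (n+2)) * a := by rw [s4b]
          _ = (e * (pw a (2*n+1) * (h * (h * h)))) * (pw a (n+2) * a) := mul_assoc _ _ _
          _ = (e * (pw a (2*n+1) * (h * (h * h)))) * pw a (n+3) := by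
              rw [← pw_succ a (show 1 ≤ n+2 by omega)]
          _ = pw a (n+3) * (e * (pw a (2*n+1) * (h * (h * h)))) := s5
          _ = (a * pw a (n+2)) * (e * (pw a (2*n+1) * (h * (h * h)))) := by
              rw [← pw_succ' a (show 1 ≤ n+2 by omega)]
          _ = a * (pw a (n+2) * (e * (pw a (2*n+1) * (h * (h * h))))) := mul_assoc _ _ _
          _ = a * e := by rw [s4a]
      -- ================== commutation a*h = h*a ==================
      have c1 : pw a (n+1) * (a * h) = a * e := by
        calc pw a (n+1) * (a * h) = (pw a (n+1) * a) * h := (mul_assoc _ _ _).symm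
          _ = pw a (n+2) * h := by rw [← pw_succ a (show 1 ≤ n+1 by omega)]
          _ = (a * pw a (n+1)) * h := by rw [pw_succ' a (show 1 ≤ n+1 by omega)]
          _ = a * (pw a (n+1) * h) := mul_assoc _ _ _
          _ = a * e := by rw [hgh]
      have c2 : pw a (n+1) * (h * a) = a * e := by
        calc pw a (n+1) * (h * a) = (pw a (n+1) * h) * a := (mul_assoc _ _ _).symm
          _ = e * a := by rw [hgh]
          _ = a * e := F2
      have c3 : h * (pw a (n+1) * (a * h)) = a * h := by
        calc h * (pw a (n+1) * (a * h)) = (h * pw a (n+1)) * (a * h) := (mul_assoc _ _ _).symm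
          _ = e * (a * h) := by rw [hhg]
          _ = (e * a) * h := (mul_assoc _ _ _).symm
          _ = (a * e) * h := by rw [F2]
          _ = a * (e * h) := mul_assoc _ _ _
          _ = a * h := by rw [heh]
      have c4 : h * (pw a (n+1) * (h * a)) = h * a := by
        calc h * (pw a (n+1) * (h * a)) = (h * pw a (n+1)) * (h * a) := (mul_assoc _ _ _).symm
          _ = e * (h * a) := by rw [hhg]
          _ = (e * h) * a := (mul_assoc _ _ _).symm
          _ = h * a := by rw [heh]
      have F3 : a * h = h * a := by
        have d1 : h * (pw a (n+1) * (a * h)) = h * (a * e) := by rw [c1]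
        have d2 : h * (pw a (n+1) * (h * a)) = h * (a * e) := by rw [c2]
        exact (c3.symm.trans d1).trans (c4.symm.trans d2).symm
      -- ================== the inverse u ==================
      have hfact : e = a * (pw a n * h) := by
        calc e = pw a (n+1) * h := hgh.symm
          _ = (a * pw a n) * h := by rw [pw_succ' a hn]
          _ = a * (pw a n * h) := mul_assoc _ _ _
      obtain ⟨y, hy⟩ := hreg a
      obtain ⟨u, hu1⟩ : ∃ u : S, a * (u * a) = a := by
        refine ⟨y * a * y, ?_⟩
        calc a * ((y * a * y) * a) = (a * y * a) * (y * a) := by simp only [mul_assoc]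
          _ = a * (y * a) := by rw [← hy]
          _ = a * y * a := (mul_assoc _ _ _).symm
          _ = a := hy.symm
      have hu1c : ∀ x : S, a * (u * (a * x)) = a * x := by
        intro x
        calc a * (u * (a * x)) = (a * (u * a)) * x := by simp only [mul_assoc]
          _ = a * x := by rw [hu1]
      have F5 : a * (u * e) = e := by
        conv_lhs => rw [hfact]
        rw [hu1c]
        exact hfact.symm
      have F5c : ∀ x : S, a * (u * (e * x)) = e * x := by
        intro x
        calc a * (u * (e * x)) = (a * (u * e)) * x := by simp only [mul_assoc]
          _ = e * x := by rw [F5]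
      have F2c : ∀ x : S, e * (a * x) = a * (e * x) := by
        intro x
        rw [← mul_assoc, F2, mul_assoc]
      have hehc : ∀ x : S, e * (h * x) = h * x := by
        intro x
        rw [← mul_assoc, heh]
      have hhec : ∀ x : S, h * (e * x) = h * x := by
        intro x
        rw [← mul_assoc, hhe]
      -- ================== b and its powers ==================
      set b : S := u * (a * a) with hb_def
      clear_value b
      have hpwb : ∀ m, 1 ≤ m → pw b m = u * pw a (m+1) := by
        intro m hm
        induction m with
        | zero => omega
        | succ k ihk =>
          rcases Nat.eq_zero_or_pos k with h0 | hk
          · subst h0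
            show pw b 1 = u * pw a 2
            rw [show pw b 1 = b from rfl, show pw a 2 = a * a from rfl, hb_def]
          · have hstep : pw a (k+1) * (u * (a * a)) = pw a (k+2) := by
              calc pw a (k+1) * (u * (a * a)) = (pw a k * a) * (u * (a * a)) := by
                    rw [pw_succ a hk]
                _ = pw a k * (a * (u * (a * a))) := mul_assoc _ _ _
                _ = pw a k * (a * a) := by rw [hu1c]
                _ = pw a (k+2) := by
                    rw [show pw a (k+2) = pw a k * pw a 2 from pw_add a hk (by omega),
                      show pw a 2 = a * a from rfl]
            calc pw b (k+1) = pw b k * b := pw_succ b hk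
              _ = (u * pw a (k+1)) * (u * (a * a)) := by rw [ihk hk, hb_def]
              _ = u * (pw a (k+1) * (u * (a * a))) := mul_assoc _ _ _
              _ = u * pw a (k+2) := by rw [hstep]
              _ = u * pw a (k+1+1) := by rw [show k+1+1 = k+2 by omega]
      -- ================== group data for b ==================
      have F9 : (u * (e * a)) * (u * (e * a)) = u * (e * a) := by
        calc (u * (e * a)) * (u * (e * a)) = u * (e * (a * (u * (e * a)))) := by
              simp only [mul_assoc]
          _ = u * (e * (e * a)) := by rw [F5c]
          _ = u * ((e * e) * a) := by rw [← mul_assoc e e a]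
          _ = u * (e * a) := by rw [he]
      have F10 : ∀ m, n ≤ m → (u * (e * a)) * pw b m = pw b m := by
        intro m hm
        rw [hpwb m (le_trans hn hm)]
        calc (u * (e * a)) * (u * pw a (m+1))
            = (u * (e * a)) * (u * (a * pw a m)) := by rw [pw_succ' a (le_trans hn hm)]
          _ = u * (e * (a * (u * (a * pw a m)))) := by simp only [mul_assoc]
          _ = u * (e * (a * pw a m)) := by rw [hu1c]
          _ = u * (e * pw a (m+1)) := by rw [← pw_succ' a (le_trans hn hm)]
          _ = u * pw a (m+1) := by rw [hel (m+1) (by omega)]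
      have F11 : ∀ m, n ≤ m → pw b m * (u * (e * a)) = pw b m := by
        intro m hm
        rw [hpwb m (le_trans hn hm)]
        calc (u * pw a (m+1)) * (u * (e * a))
            = (u * (pw a m * a)) * (u * (e * a)) := by rw [pw_succ a (le_trans hn hm)]
          _ = u * (pw a m * (a * (u * (e * a)))) := by simp only [mul_assoc]
          _ = u * (pw a m * (e * a)) := by rw [F5c]
          _ = u * (pw a m * (a * e)) := by rw [F2]
          _ = u * ((pw a m * a) * e) := by rw [← mul_assoc (pw a m) a e]
          _ = u * (pw a (m+1) * e) := by rw [← pw_succ a (le_trans hn hm)]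
          _ = u * pw a (m+1) := by rw [her (m+1) (by omega)]
      have F12 : pw b n * (u * (a * (h * a))) = u * (e * a) := by
        rw [hpwb n hn]
        calc (u * pw a (n+1)) * (u * (a * (h * a)))
            = (u * (pw a n * a)) * (u * (a * (h * a))) := by rw [pw_succ a hn]
          _ = u * (pw a n * (a * (u * (a * (h * a))))) := by simp only [mul_assoc]
          _ = u * (pw a n * (a * (h * a))) := by rw [hu1c]
          _ = u * (((pw a n * a) * h) * a) := by simp only [mul_assoc]
          _ = u * ((pw a (n+1) * h) * a) := by rw [← pw_succ a hn]
          _ = u * (e * a) := by rw [hgh]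
      have F13 : (u * (a * (h * a))) * pw b n = u * (e * a) := by
        rw [hpwb n hn]
        calc (u * (a * (h * a))) * (u * pw a (n+1))
            = (u * (a * (h * a))) * (u * (a * pw a n)) := by rw [pw_succ' a hn]
          _ = u * (a * (h * (a * (u * (a * pw a n))))) := by simp only [mul_assoc]
          _ = u * (a * (h * (a * pw a n))) := by rw [hu1c]
          _ = u * (a * (h * pw a (n+1))) := by rw [← pw_succ' a hn]
          _ = u * (a * e) := by rw [hhg]
          _ = u * (e * a) := by rw [F2]
      have F14 : (u * (e * a)) * (u * (a * (h * a))) = u * (a * (h * a)) := by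
        calc (u * (e * a)) * (u * (a * (h * a)))
            = u * (e * (a * (u * (a * (h * a))))) := by simp only [mul_assoc]
          _ = u * (e * (a * (h * a))) := by rw [hu1c]
          _ = u * (a * (e * (h * a))) := by rw [F2c]
          _ = u * (a * (h * a)) := by rw [hehc]
      have F15 : (u * (a * (h * a))) * (u * (e * a)) = u * (a * (h * a)) := by
        calc (u * (a * (h * a))) * (u * (e * a))
            = u * (a * (h * (a * (u * (e * a))))) := by simp only [mul_assoc]
          _ = u * (a * (h * (e * a))) := by rw [F5c]
          _ = u * (a * (h * a)) := by rw [hhec]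
      -- ================== apply induction hypothesis ==================
      have hbE := ih hn b (u * (e * a)) (u * (a * (h * a))) F9 F10 F11 F12 F13 F14 F15
      have F7 : PConj a b := by
        refine ⟨a, u * a, hu1.symm, ?_⟩
        rw [hb_def, mul_assoc u a a]
      have F17 : b * (u * (e * a)) = u * (a * (e * a)) := by
        calc b * (u * (e * a)) = u * (a * (a * (u * (e * a)))) := by
              rw [hb_def]; simp only [mul_assoc]
          _ = u * (a * (e * a)) := by rw [F5c]
      have F18 : PConj (u * (a * (e * a))) (a * e) := by
        refine ⟨u * (a * e), a, ?_, ?_⟩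
        · simp only [mul_assoc]
        · exact (hu1c e).symm
      rcases hbE with h1 | h1
      · have hP : PConj b (a * e) := by
          rw [← F17] at F18
          rw [h1] at F18
          exact F18
        exact Relation.TransGen.head F7 (Relation.TransGen.single hP)
      · have hP : PConj (b * (u * (e * a))) (a * e) := by
          rw [F17]
          exact F18
        exact Relation.TransGen.head F7 (h1.tail hP)

lemma pconj_symm {a b : S} (hab : PConj a b) : PConj b a := by
  obtain ⟨x, y, h1, h2⟩ := hab
  exact ⟨y, x, h2, h1⟩

lemma sconj_symm {a b : S} (hab : SConj a b) : SConj b a := by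
  induction hab with
  | single h => exact Relation.TransGen.single (pconj_symm h)
  | tail _ h ihh => exact Relation.TransGen.head (pconj_symm h) ihh

lemma abs_left {e g : S} (he : e * e = e)
    (hu : ∃ u : WithOne S, (e : WithOne S) * u = (g : WithOne S)) : e * g = g := by
  rcases hu with ⟨u, hu⟩
  have : ((e * g : S) : WithOne S) = (g : WithOne S) := by
    rw [WithOne.coe_mul, ← hu, ← mul_assoc, ← WithOne.coe_mul, he]
  exact WithOne.coe_inj.mp this

lemma abs_right {e g : S} (he : e * e = e)
    (hu : ∃ u : WithOne S, u * (e : WithOne S) = (g : WithOne S)) : g * e = g := by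
  rcases hu with ⟨u, hu⟩
  have : ((g * e : S) : WithOne S) = (g : WithOne S) := by
    rw [WithOne.coe_mul, ← hu, mul_assoc, ← WithOne.coe_mul, he]
  exact WithOne.coe_inj.mp this

lemma ex_right {e g : S} (he : e * e = e)
    (hu : ∃ u : WithOne S, (g : WithOne S) * u = (e : WithOne S)) :
    ∃ r : S, g * r = e := by
  rcases hu with ⟨u, hu⟩
  by_cases h1 : u = 1
  · subst h1
    rw [mul_one] at hu
    have hge : g = e := WithOne.coe_inj.mp hu
    exact ⟨e, by rw [hge, he]⟩
  · obtain ⟨x, hx⟩ := WithOne.ne_one_iff_exists.mp h1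
    rw [← hx, ← WithOne.coe_mul] at hu
    exact ⟨x, WithOne.coe_inj.mp hu⟩

lemma ex_left {e g : S} (he : e * e = e)
    (hu : ∃ u : WithOne S, u * (g : WithOne S) = (e : WithOne S)) :
    ∃ l : S, l * g = e := by
  rcases hu with ⟨u, hu⟩
  by_cases h1 : u = 1
  · subst h1
    rw [one_mul] at hu
    have hge : g = e := WithOne.coe_inj.mp hu
    exact ⟨e, by rw [hge, he]⟩
  · obtain ⟨x, hx⟩ := WithOne.ne_one_iff_exists.mp h1
    rw [← hx, ← WithOne.coe_mul] at hu
    exact ⟨x, WithOne.coe_inj.mp hu⟩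

/-- From the H-relation data, produce the full "local group" data needed by `key_lemma`. -/
lemma group_data {a ea : S} {ta : ℕ} (hta : 1 ≤ ta) (hea : ea * ea = ea)
    (hHa : HRel (pw a ta) ea) :
    ∃ h : S, (∀ m, ta ≤ m → ea * pw a m = pw a m) ∧
      (∀ m, ta ≤ m → pw a m * ea = pw a m) ∧
      pw a ta * h = ea ∧ h * pw a ta = ea ∧ ea * h = h ∧ h * ea = h := by
  obtain ⟨⟨hL1, hL2⟩, ⟨hR1, hR2⟩⟩ := hHa
  have heg : ea * pw a ta = pw a ta := abs_left hea hR2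
  have hge : pw a ta * ea = pw a ta := abs_right hea hL2
  obtain ⟨r, hr⟩ := ex_right hea hR1
  obtain ⟨l, hl⟩ := ex_left hea hL1
  have hle : l * ea = ea * r := by
    calc l * ea = l * (pw a ta * r) := by rw [hr]
      _ = (l * pw a ta) * r := (mul_assoc _ _ _).symm
      _ = ea * r := by rw [hl]
  refine ⟨ea * r, ?_, ?_, ?_, ?_, ?_, ?_⟩
  · intro m hm
    rcases Nat.eq_or_lt_of_le hm with h0 | h0
    · rw [← h0, heg]
    · rw [show m = ta + (m - ta) by omega, pw_add a hta (by omega), ← mul_assoc, heg]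
  · intro m hm
    rcases Nat.eq_or_lt_of_le hm with h0 | h0
    · rw [← h0, hge]
    · rw [show m = (m - ta) + ta by omega, pw_add a (by omega) hta, mul_assoc, hge]
  · calc pw a ta * (ea * r) = (pw a ta * ea) * r := (mul_assoc _ _ _).symm
      _ = pw a ta * r := by rw [hge]
      _ = ea := hr
  · calc (ea * r) * pw a ta = (l * ea) * pw a ta := by rw [hle]
      _ = l * (ea * pw a ta) := mul_assoc _ _ _
      _ = l * pw a ta := by rw [heg]
      _ = ea := hl
  · calc ea * (ea * r) = (ea * ea) * r := (mul_assoc _ _ _).symm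
      _ = ea * r := by rw [hea]
  · calc (ea * r) * ea = (l * ea) * ea := by rw [hle]
      _ = l * (ea * ea) := mul_assoc _ _ _
      _ = l * ea := by rw [hea]
      _ = ea * r := hle


theorem sconj_iff_sconj_mul_idempotents
    (hreg : ∀ x : S, ∃ y : S, x = x * y * x)
    (a b ea eb : S) (ta tb : ℕ) (hta : 1 ≤ ta) (htb : 1 ≤ tb)
    (hea : ea * ea = ea) (hHa : HRel (pw a ta) ea)
    (heb : eb * eb = eb) (hHb : HRel (pw b tb) eb) :
    SConj a b ↔ SConj (a * ea) (b * eb) := by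
  obtain ⟨h, hel, her, hgh, hhg, heh, hhe⟩ := group_data hta hea hHa
  obtain ⟨h', hel', her', hgh', hhg', heh', hhe'⟩ := group_data htb heb hHb
  have Ka : a * ea = a ∨ SConj a (a * ea) :=
    key_lemma hreg ta hta a ea h hea hel her hgh hhg heh hhe
  have Kb : b * eb = b ∨ SConj b (b * eb) :=
    key_lemma hreg tb htb b eb h' heb hel' her' hgh' hhg' heh' hhe'
  constructor
  · intro hab
    rcases Ka with ka | ka <;> rcases Kb with kb | kb
    · rw [ka, kb]; exact hab
    · rw [ka]; exact hab.trans kb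
    · rw [kb]; exact (sconj_symm ka).trans hab
    · exact ((sconj_symm ka).trans hab).trans kb
  · intro hcd
    rcases Ka with ka | ka <;> rcases Kb with kb | kb
    · rw [ka, kb] at hcd; exact hcd
    · rw [ka] at hcd; exact hcd.trans (sconj_symm kb)
    · rw [kb] at hcd; exact ka.trans hcd
    · exact (ka.trans hcd).trans (sconj_symm kb)
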